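/- arXiv:1402.6100 — 5 statements merged into one kernel-verified Lean document; each statement's English description precedes it below -/
import Mathlib

section
/- In the Clifford module F, the operators J^f(n) defined as the modes of the normally ordered product :Psi^+(z)Psi^-(z): satisfy the commutation relations [J^f(n), Psi^±(m + 1/2)] = ± Psi^±(m + n + 1/2) for all integers m, n. -/
/-- The fermionic Fock space `F` for the Clifford algebra `CL`:
`ψp n` is `Ψ⁺(n + 1/2)` and `ψm n` is `Ψ⁻(n + 1/2)` for `n : ℤ`. -/
structure CliffordFock (V : Type) [AddCommGroup V] [Module ℂ V] where
  ψp : ℤ → Module.End ℂ V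
  ψm : ℤ → Module.End ℂ V
  vac : V
  anti_pm : ∀ r s : ℤ, ψp r * ψm s + ψm s * ψp r = if r + s + 1 = 0 then 1 else 0
  anti_pp : ∀ r s : ℤ, ψp r * ψp s + ψp s * ψp r = 0
  anti_mm : ∀ r s : ℤ, ψm r * ψm s + ψm s * ψm r = 0
  vac_p : ∀ n : ℤ, 0 ≤ n → ψp n vac = 0
  vac_m : ∀ n : ℤ, 0 ≤ n → ψm n vac = 0
  basis : Module.Basis (Finset ℕ × Finset ℕ) ℂ V
  basis_eq : ∀ A B : Finset ℕ,
    basis (A, B) =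
      ((((A.sort (· ≤ ·)).reverse.map fun n => ψm (-(n + 1 : ℤ))).prod *
        ((B.sort (· ≤ ·)).reverse.map fun n => ψp (-(n + 1 : ℤ))).prod) vac)

variable {V : Type} [AddCommGroup V] [Module ℂ V]

/-- `Ω_s = Ψ⁺(-s-1/2) Ψ⁺(-s+1/2) ⋯ Ψ⁺(-3/2) |0⟩`. -/
noncomputable def CliffordFock.Omega (M : CliffordFock V) (s : ℕ) : V :=
  (((List.range' 1 s).reverse.map fun n => M.ψp (-(n + 1 : ℤ))).prod) M.vac

/-- `Gm i` is the operator `G⁻(i - 1/2) = (ℓ + 1 - i) Ψ⁻(i - 1/2) + ∑_{n ≥ 1} χ_{-n} Ψ⁻(n + i - 1/2)`,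
encoded by truncations (on each fixed vector the sum stabilizes). -/
def IsGmFamily (M : CliffordFock V) (ℓ : ℤ) (χ : ℕ → ℂ) (Gm : ℤ → Module.End ℂ V) : Prop :=
  ∀ (i : ℤ) (v : V), ∃ N : ℕ, ∀ N' : ℕ, N ≤ N' →
    Gm i v = ((ℓ + 1 - i : ℤ) : ℂ) • M.ψm (i - 1) v +
      ∑ n ∈ Finset.Icc 1 N', χ n • M.ψm ((n : ℤ) + i - 1) v

/-- The normally ordered product `:Ψ⁺(k+1/2) Ψ⁻(n-k-1/2):`. -/
def CliffordFock.nord (M : CliffordFock V) (n k : ℤ) : Module.End ℂ V :=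
  if 0 ≤ n - k - 1 then M.ψp k * M.ψm (n - k - 1)
  else -(M.ψm (n - k - 1) * M.ψp k)
section
variable {R : Type*} [Ring R]

lemma aux_comm1 (a b c d : R) (h1 : c*b + b*c = d) (h2 : a*c + c*a = 0) (hd : d*a = a*d) :
    a*b*c - c*(a*b) = d*a := by
  have key : a*b*c - c*(a*b) = a*(c*b + b*c) - (a*c + c*a)*b := by noncomm_ring
  rw [key, h1, h2, hd]; noncomm_ring

lemma aux_comm2 (a b c d : R) (h1 : c*b + b*c = d) (h2 : a*c + c*a = 0) (hd : d*a = a*d) :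
    (-(b*a))*c - c*(-(b*a)) = d*a := by
  have key : (-(b*a))*c - c*(-(b*a)) = (c*b + b*c)*a - b*(a*c + c*a) := by noncomm_ring
  rw [key, h1, h2]; noncomm_ring

lemma aux_comm3 (a b c d : R) (h1 : a*c + c*a = d) (h2 : b*c + c*b = 0) :
    a*b*c - c*(a*b) = -(d*b) := by
  have key : a*b*c - c*(a*b) = a*(b*c + c*b) - (a*c + c*a)*b := by noncomm_ring
  rw [key, h1, h2]; noncomm_ring

lemma aux_comm4 (a b c d : R) (h1 : a*c + c*a = d) (h2 : b*c + c*b = 0) (hd : d*b = b*d) :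
    (-(b*a))*c - c*(-(b*a)) = -(d*b) := by
  have key : (-(b*a))*c - c*(-(b*a)) = (b*c + c*b)*a - b*(a*c + c*a) := by noncomm_ring
  rw [key, h1, h2, hd]; noncomm_ring

end

lemma nord_comm_p (M : CliffordFock V) (n m k : ℤ) :
    M.nord n k * M.ψp m - M.ψp m * M.nord n k
      = if k = m + n then M.ψp (m + n) else 0 := by
  set d : Module.End ℂ V := if m + (n - k - 1) + 1 = 0 then 1 else 0 with hdf
  have h1 : M.ψp m * M.ψm (n - k - 1) + M.ψm (n - k - 1) * M.ψp m = d :=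
    M.anti_pm m (n - k - 1)
  have h2 := M.anti_pp k m
  have hd : d * M.ψp k = M.ψp k * d := by rw [hdf]; split_ifs <;> simp
  have hres : d * M.ψp k = if k = m + n then M.ψp (m + n) else 0 := by
    have hc : (m + (n - k - 1) + 1 = 0) ↔ (k = m + n) := by omega
    rw [hdf, if_congr hc rfl rfl]
    split_ifs with h
    · rw [one_mul, h]
    · rw [zero_mul]
  by_cases hcase : 0 ≤ n - k - 1
  · rw [CliffordFock.nord, if_pos hcase]
    exact (aux_comm1 _ _ _ _ h1 h2 hd).trans hres
  · rw [CliffordFock.nord, if_neg hcase]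
    exact (aux_comm2 _ _ _ _ h1 h2 hd).trans hres

lemma nord_comm_m (M : CliffordFock V) (n m k : ℤ) :
    M.nord n k * M.ψm m - M.ψm m * M.nord n k
      = if k = -(m + 1) then -M.ψm (m + n) else 0 := by
  set d : Module.End ℂ V := if k + m + 1 = 0 then 1 else 0 with hdf
  have h1 : M.ψp k * M.ψm m + M.ψm m * M.ψp k = d := M.anti_pm k m
  have h2 := M.anti_mm (n - k - 1) m
  have hd : d * M.ψm (n - k - 1) = M.ψm (n - k - 1) * d := by
    rw [hdf]; split_ifs <;> simp
  have hres : -(d * M.ψm (n - k - 1)) = if k = -(m + 1) then -M.ψm (m + n) else 0 := by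
    have hc : (k + m + 1 = 0) ↔ (k = -(m + 1)) := by omega
    rw [hdf, if_congr hc rfl rfl]
    split_ifs with h
    · rw [one_mul]; congr 2; omega
    · rw [zero_mul, neg_zero]
  by_cases hcase : 0 ≤ n - k - 1
  · rw [CliffordFock.nord, if_pos hcase]
    exact (aux_comm3 _ _ _ _ h1 h2).trans hres
  · rw [CliffordFock.nord, if_neg hcase]
    exact (aux_comm4 _ _ _ _ h1 h2 hd).trans hres

theorem charge_current_commutators (M : CliffordFock V) (J : ℤ → Module.End ℂ V)
    (hJ : ∀ (n : ℤ) (v : V), ∃ N : ℕ, ∀ N' : ℕ, N ≤ N' →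
      J n v = (∑ k ∈ Finset.Icc (-(N' : ℤ)) (N' : ℤ), M.nord n k) v) :
    ∀ m n : ℤ,
      (J n * M.ψp m - M.ψp m * J n = M.ψp (m + n)) ∧
      (J n * M.ψm m - M.ψm m * J n = -M.ψm (m + n)) := by
  intro m n
  constructor
  · apply LinearMap.ext; intro v
    obtain ⟨N1, h1⟩ := hJ n (M.ψp m v)
    obtain ⟨N2, h2⟩ := hJ n v
    set N : ℕ := max N1 N2 + (m + n).natAbs with hN
    have key : (∑ k ∈ Finset.Icc (-(N : ℤ)) (N : ℤ), M.nord n k) * M.ψp m -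
        M.ψp m * (∑ k ∈ Finset.Icc (-(N : ℤ)) (N : ℤ), M.nord n k) = M.ψp (m + n) := by
      rw [Finset.sum_mul, Finset.mul_sum, ← Finset.sum_sub_distrib]
      simp_rw [nord_comm_p M n m]
      rw [Finset.sum_ite_eq' _ (m + n) (fun _ => M.ψp (m + n)), if_pos]
      rw [Finset.mem_Icc]; omega
    have hkv := congrArg (fun T : Module.End ℂ V => T v) key
    simp only [LinearMap.sub_apply, Module.End.mul_apply] at hkv ⊢
    rw [h1 N (by omega), h2 N (by omega)]
    exact hkv
  · apply LinearMap.ext; intro v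
    obtain ⟨N1, h1⟩ := hJ n (M.ψm m v)
    obtain ⟨N2, h2⟩ := hJ n v
    set N : ℕ := max N1 N2 + (m + 1).natAbs with hN
    have key : (∑ k ∈ Finset.Icc (-(N : ℤ)) (N : ℤ), M.nord n k) * M.ψm m -
        M.ψm m * (∑ k ∈ Finset.Icc (-(N : ℤ)) (N : ℤ), M.nord n k) = -M.ψm (m + n) := by
      rw [Finset.sum_mul, Finset.mul_sum, ← Finset.sum_sub_distrib]
      simp_rw [nord_comm_m M n m]
      rw [Finset.sum_ite_eq' _ (-(m + 1)) (fun _ => -M.ψm (m + n)), if_pos]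
      rw [Finset.mem_Icc]; omega
    have hkv := congrArg (fun T : Module.End ℂ V => T v) key
    simp only [LinearMap.sub_apply, Module.End.mul_apply, LinearMap.neg_apply] at hkv ⊢
    rw [h1 N (by omega), h2 N (by omega)]
    exact hkv
end

section
/- Let chi_{-1}, chi_{-2}, ... be complex numbers and ell >= 1. Define operators on the exterior algebra F by G^-(i - 1/2) = (ell + 1 - i) Psi^-(i - 1/2) + sum_{n>=1} chi_{-n} Psi^-(n + i - 1/2). Let Omega_ell = Psi^+(-ell - 1/2) Psi^+(-ell + 1/2) ... Psi^+(-3/2) 1. Then G^-(1/2) G^-(3/2) ... G^-(ell - 1/2) Omega_ell = (-1)^ell * ell! * S_ell(-chi_{-1}, ..., -chi_{-ell}) * 1, where S_ell is the Schur polynomial. -/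
noncomputable def schurA : PowerSeries (MvPolynomial ℕ ℚ) :=
  PowerSeries.mk fun n => if n = 0 then 0 else MvPolynomial.C ((n : ℚ)⁻¹) * MvPolynomial.X n

/-- `S` is the family of Schur polynomials, i.e. the coefficients of the formal power
series `exp (∑_{n≥1} (x_n/n) yⁿ) = ∑_r S_r yʳ`.  Since `schurA` has zero constant term,
the coefficient of `yʳ` in its exponential is the finite sum
`∑_{k≤r} (1/k!) · [yʳ] (schurA ^ k)`. -/
def IsSchurFamily (S : ℕ → MvPolynomial ℕ ℚ) : Prop :=
  ∀ r : ℕ, S r = ∑ k ∈ Finset.range (r + 1),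
    ((k.factorial : ℚ)⁻¹) • PowerSeries.coeff r (schurA ^ k)

variable {V : Type} [AddCommGroup V] [Module ℂ V]

open PowerSeries Finset

lemma coeff_schurA (n : ℕ) : PowerSeries.coeff n schurA
    = if n = 0 then 0 else MvPolynomial.C ((n : ℚ)⁻¹) * MvPolynomial.X n := by
  simp [schurA]

lemma coeff_pow_schurA_eq_zero {k r : ℕ} (h : r < k) :
    PowerSeries.coeff r (schurA ^ k) = 0 := by
  induction k generalizing r with
  | zero => omega
  | succ k ih =>
    rw [pow_succ, PowerSeries.coeff_mul]
    apply Finset.sum_eq_zero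
    rintro ⟨i, j⟩ hij
    rw [Finset.HasAntidiagonal.mem_antidiagonal] at hij
    rcases Nat.eq_zero_or_pos j with hj | hj
    · subst hj
      simp [coeff_schurA]
    · have : i < k := by omega
      simp [ih this]

lemma coeff_deriv_schurA (n : ℕ) :
    PowerSeries.coeff n (PowerSeries.derivative (MvPolynomial ℕ ℚ) schurA) = MvPolynomial.X (n+1) := by
  rw [PowerSeries.coeff_derivative, coeff_schurA]
  simp only [Nat.add_eq_zero, one_ne_zero, and_false, if_false]
  have h1 : ((n : MvPolynomial ℕ ℚ) + 1) = MvPolynomial.C ((n:ℚ)+1) := by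
    rw [map_add, map_one, MvPolynomial.C_eq_coe_nat]
  have h2 : ((n:ℚ)+1) ≠ 0 := by positivity
  rw [mul_comm, ← mul_assoc, h1, ← map_mul]
  rw [show ((n:ℚ)+1) * (((n+1 : ℕ):ℚ))⁻¹ = 1 by push_cast; rw [mul_inv_cancel₀ h2]]
  simp

lemma schur_zero {S : ℕ → MvPolynomial ℕ ℚ} (hS : IsSchurFamily S) : S 0 = 1 := by
  rw [hS 0]
  simp

lemma schur_rec {S : ℕ → MvPolynomial ℕ ℚ} (hS : IsSchurFamily S) (r : ℕ) (hr : 1 ≤ r) :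
    (r : ℚ) • S r = ∑ k ∈ Finset.Icc 1 r, MvPolynomial.X k * S (r - k) := by
  have hderiv : ∀ k : ℕ,
      PowerSeries.derivative (MvPolynomial ℕ ℚ) (schurA ^ (k+1))
        = (k+1) • (schurA ^ k * PowerSeries.derivative (MvPolynomial ℕ ℚ) schurA) := by
    intro k
    rw [Derivation.leibniz_pow]
    simp [smul_eq_mul]
  have key : ∀ k : ℕ, (r : ℚ) • (PowerSeries.coeff r (schurA ^ (k+1))) =
      ((k+1 : ℕ) : ℚ) • ∑ p ∈ antidiagonal (r-1),
        PowerSeries.coeff p.1 (schurA ^ k) * MvPolynomial.X (p.2+1) := by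
    intro k
    have h1 := PowerSeries.coeff_derivative (schurA ^ (k+1)) (r-1)
    rw [hderiv k] at h1
    have hc : (((r-1 : ℕ) : MvPolynomial ℕ ℚ) + 1) = MvPolynomial.C ((r : ℕ) : ℚ) := by
      rw [MvPolynomial.C_eq_coe_nat]
      norm_cast
      omega
    rw [hc, show r - 1 + 1 = r from by omega,
      mul_comm ((PowerSeries.coeff r) (schurA ^ (k+1))) (MvPolynomial.C _),
      ← MvPolynomial.smul_eq_C_mul, map_nsmul, PowerSeries.coeff_mul] at h1
    rw [← h1, ← Nat.cast_smul_eq_nsmul ℚ]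
    congr 1
    apply Finset.sum_congr rfl
    intro p _
    rw [coeff_deriv_schurA]
  -- now assemble
  rw [hS r, Finset.smul_sum]
  have hsplit : ∀ k ∈ Finset.range (r+1), (r:ℚ) • (((k.factorial : ℚ)⁻¹)
        • PowerSeries.coeff r (schurA ^ k))
      = if k = 0 then 0 else ((k.factorial : ℚ)⁻¹ * k) • ∑ p ∈ antidiagonal (r-1),
          PowerSeries.coeff p.1 (schurA ^ (k-1)) * MvPolynomial.X (p.2+1) := by
    intro k _
    rcases k with _ | k
    · simp only [if_pos rfl, pow_zero]
      rw [smul_comm]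
      rw [show (PowerSeries.coeff (R := MvPolynomial ℕ ℚ) r) 1 = 0 by
        rw [PowerSeries.coeff_one, if_neg (by omega)]]
      simp
    · rw [if_neg (Nat.succ_ne_zero k), smul_comm, key k]
      rw [smul_smul, Nat.succ_sub_one]
  rw [Finset.sum_congr rfl hsplit]
  have hins : Finset.range (r+1) = insert 0 (Finset.Icc 1 r) := by
    ext x; simp only [Finset.mem_range, Finset.mem_insert, Finset.mem_Icc]; omega
  rw [hins, Finset.sum_insert (by simp), if_pos rfl, zero_add]
  have hstep2 : ∀ k ∈ Finset.Icc 1 r,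
      (if k = 0 then (0:MvPolynomial ℕ ℚ) else ((k.factorial : ℚ)⁻¹ * k) •
          ∑ p ∈ antidiagonal (r-1),
            PowerSeries.coeff p.1 (schurA ^ (k-1)) * MvPolynomial.X (p.2+1))
      = ∑ p ∈ antidiagonal (r-1),
          (((k-1).factorial : ℚ)⁻¹ • PowerSeries.coeff p.1 (schurA ^ (k-1)))
            * MvPolynomial.X (p.2+1) := by
    intro k hk
    rw [Finset.mem_Icc] at hk
    rw [if_neg (by omega)]
    have hf : (k.factorial : ℚ)⁻¹ * k = (((k-1).factorial : ℚ))⁻¹ := by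
      obtain ⟨k', rfl⟩ : ∃ k', k = k'+1 := ⟨k-1, by omega⟩
      rw [Nat.factorial_succ, Nat.succ_sub_one]
      have h1 : ((k'+1 : ℕ) : ℚ) ≠ 0 := by positivity
      have h2 : ((k'.factorial : ℕ) : ℚ) ≠ 0 := by
        exact_mod_cast Nat.cast_ne_zero.mpr (Nat.factorial_ne_zero k')
      push_cast
      field_simp
    rw [hf, Finset.smul_sum]
    exact Finset.sum_congr rfl fun p _ => (smul_mul_assoc _ _ _).symm
  rw [Finset.sum_congr rfl hstep2, Finset.sum_comm]
  have hstep3 : ∀ p ∈ antidiagonal (r-1),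
      (∑ k ∈ Finset.Icc 1 r,
        (((k-1).factorial : ℚ)⁻¹ • PowerSeries.coeff p.1 (schurA ^ (k-1)))
          * MvPolynomial.X (p.2+1))
      = S p.1 * MvPolynomial.X (p.2+1) := by
    intro p hp
    rw [Finset.HasAntidiagonal.mem_antidiagonal] at hp
    rw [← Finset.sum_mul]
    congr 1
    have hre : ∑ k ∈ Finset.Icc 1 r,
        ((k-1).factorial : ℚ)⁻¹ • PowerSeries.coeff p.1 (schurA ^ (k-1))
        = ∑ k ∈ Finset.range r,
        ((k.factorial : ℚ)⁻¹ • PowerSeries.coeff p.1 (schurA ^ k)) := by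
      apply Finset.sum_nbij' (fun k => k - 1) (fun k => k + 1)
      · intro a ha; rw [Finset.mem_Icc] at ha; rw [Finset.mem_range]; omega
      · intro a ha; rw [Finset.mem_range] at ha; rw [Finset.mem_Icc]; omega
      · intro a ha; rw [Finset.mem_Icc] at ha; omega
      · intro a ha; omega
      · intro a ha; rfl
    rw [hre, hS p.1]
    symm
    apply Finset.sum_subset
    · intro x hx
      rw [Finset.mem_range] at hx ⊢
      omega
    · intro x hx hx2
      rw [Finset.mem_range, not_lt] at hx2
      rw [coeff_pow_schurA_eq_zero (by omega), smul_zero]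
  rw [Finset.sum_congr rfl hstep3]
  apply Finset.sum_nbij' (fun p : ℕ × ℕ => p.2 + 1) (fun k => (r - k, k - 1))
  · rintro ⟨a, b⟩ ha
    rw [Finset.HasAntidiagonal.mem_antidiagonal] at ha
    rw [Finset.mem_Icc]
    simp only at ha ⊢
    omega
  · intro k hk
    rw [Finset.mem_Icc] at hk
    rw [Finset.HasAntidiagonal.mem_antidiagonal]
    simp only
    omega
  · rintro ⟨a, b⟩ ha
    rw [Finset.HasAntidiagonal.mem_antidiagonal] at ha
    simp only at ha ⊢
    have : r - (b+1) = a := by omega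
    simp [this]
  · intro k hk
    rw [Finset.mem_Icc] at hk
    simp only
    omega
  · rintro ⟨a, b⟩ ha
    rw [Finset.HasAntidiagonal.mem_antidiagonal] at ha
    simp only at ha ⊢
    have h1 : r - (b + 1) = a := by omega
    rw [h1, mul_comm]

section Scalars
variable (x a b : ℕ → ℂ)

-- swap helper
lemma swapIcc (m : ℕ) (g : ℕ → ℕ → ℂ) :
    ∑ r ∈ range (m+1), ∑ k ∈ Icc 1 r, g r k
      = ∑ k ∈ Icc 1 m, ∑ r ∈ Icc k m, g r k := by
  apply Finset.sum_comm'
  intro r k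
  simp only [mem_range, mem_Icc]
  omega

lemma swapIcc' (m : ℕ) (g : ℕ → ℕ → ℂ) :
    ∑ r ∈ range (m+1), ∑ k ∈ Icc 1 (m - r), g r k
      = ∑ k ∈ Icc 1 m, ∑ r ∈ range (m - k + 1), g r k := by
  apply Finset.sum_comm'
  intro r k
  simp only [mem_range, mem_Icc]
  omega

lemma reindexIcc (m k : ℕ) (hk : k ≤ m) (g : ℕ → ℂ) :
    ∑ r ∈ Icc k m, g (r - k) = ∑ r ∈ range (m - k + 1), g r := by
  apply Finset.sum_nbij' (fun r => r - k) (fun r => r + k)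
  · intro r hr; rw [mem_Icc] at hr; rw [mem_range]; omega
  · intro r hr; rw [mem_range] at hr; rw [mem_Icc]; omega
  · intro r hr; rw [mem_Icc] at hr; omega
  · intro r _; omega
  · intro r _; rfl

lemma convAB (ha : a 0 = 1) (hb : b 0 = 1)
    (hra : ∀ r : ℕ, (r:ℂ) * a r = ∑ k ∈ Icc 1 r, x k * a (r-k))
    (hrb : ∀ r : ℕ, (r:ℂ) * b r = ∑ k ∈ Icc 1 r, (-x k) * b (r-k)) :
    ∀ m, ∑ r ∈ range (m+1), a r * b (m-r) = if m = 0 then 1 else 0 := by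
  intro m
  induction m using Nat.strong_induction_on with
  | _ m ih =>
  rcases Nat.eq_zero_or_pos m with rfl | hm
  · simp [ha, hb]
  rw [if_neg (by omega)]
  have hmc : (m:ℂ) ≠ 0 := Nat.cast_ne_zero.mpr (by omega)
  have hmain : (m:ℂ) * ∑ r ∈ range (m+1), a r * b (m-r) = 0 := by
    rw [Finset.mul_sum]
    have hsplit : ∀ r ∈ range (m+1), (m:ℂ) * (a r * b (m-r))
        = ((r:ℂ) * a r) * b (m-r) + a r * ((((m-r : ℕ)):ℂ) * b (m-r)) := by
      intro r hr
      rw [mem_range] at hr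
      have : (((m - r : ℕ)):ℂ) = (m:ℂ) - (r:ℂ) := by
        push_cast [Nat.cast_sub (by omega : r ≤ m)]; ring
      rw [this]; ring
    rw [Finset.sum_congr rfl hsplit, Finset.sum_add_distrib]
    have hT1 : ∑ r ∈ range (m+1), ((r:ℂ) * a r) * b (m-r)
        = ∑ k ∈ Icc 1 m, x k * (∑ r ∈ range (m - k + 1), a r * b ((m - k) - r)) := by
      have h1 : ∀ r ∈ range (m+1), ((r:ℂ) * a r) * b (m-r)
          = ∑ k ∈ Icc 1 r, x k * (a (r-k) * b (m-r)) := by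
        intro r _
        rw [hra r, Finset.sum_mul]
        exact Finset.sum_congr rfl fun k _ => by ring
      rw [Finset.sum_congr rfl h1, swapIcc]
      apply Finset.sum_congr rfl
      intro k hk
      rw [mem_Icc] at hk
      rw [Finset.mul_sum]
      trans (∑ r ∈ Icc k m, (fun j => x k * (a j * b (m - k - j))) (r - k))
      · apply Finset.sum_congr rfl
        intro r hr
        rw [mem_Icc] at hr
        show _ = x k * (a (r-k) * b (m-k-(r-k)))
        rw [show m - k - (r-k) = m - r by omega]
      · exact reindexIcc m k hk.2 (fun j => x k * (a j * b (m - k - j)))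
    have hT2 : ∑ r ∈ range (m+1), a r * ((((m-r:ℕ)):ℂ) * b (m-r))
        = ∑ k ∈ Icc 1 m, (-x k) * (∑ r ∈ range (m - k + 1), a r * b ((m - k) - r)) := by
      have h1 : ∀ r ∈ range (m+1), a r * ((((m-r:ℕ)):ℂ) * b (m-r))
          = ∑ k ∈ Icc 1 (m-r), (-x k) * (a r * b ((m-r) - k)) := by
        intro r _
        rw [hrb (m-r), Finset.mul_sum]
        exact Finset.sum_congr rfl fun k _ => by ring
      rw [Finset.sum_congr rfl h1, swapIcc']
      apply Finset.sum_congr rfl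
      intro k hk
      rw [mem_Icc] at hk
      rw [Finset.mul_sum]
      apply Finset.sum_congr rfl
      intro r hr
      rw [mem_range] at hr
      have : m - r - k = m - k - r := by omega
      rw [this]
    rw [hT1, hT2, ← Finset.sum_add_distrib]
    apply Finset.sum_eq_zero
    intro k hk
    rw [mem_Icc] at hk
    rcases Nat.eq_zero_or_pos (m - k) with h0 | hpos
    · rw [h0] at *
      ring
    · rw [ih (m-k) (by omega), if_neg (by omega)]
      ring
  exact (mul_eq_zero.mp hmain).resolve_left hmc

noncomputable def useq (ℓ : ℕ) (a b : ℕ → ℂ) (i : ℕ) : ℂ :=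
  ∑ r ∈ range (i+1), ((ℓ:ℂ) - r)⁻¹ * (a r * b (i - r))

lemma uSum (ℓ : ℕ)
    (hrb : ∀ r : ℕ, (r:ℂ) * b r = ∑ k ∈ Icc 1 r, (-x k) * b (r-k)) (i : ℕ) :
    ∑ k ∈ Icc 1 i, x k * useq ℓ a b (i-k)
      = ∑ r ∈ range (i+1), ((ℓ:ℂ)-r)⁻¹ * (a r * (-((((i-r:ℕ)):ℂ)) * b (i-r))) := by
  unfold useq
  have h1 : ∀ k ∈ Icc 1 i, x k * ∑ r ∈ range (i-k+1), ((ℓ:ℂ) - r)⁻¹ * (a r * b (i - k - r))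
      = ∑ r ∈ range (i-k+1), x k * (((ℓ:ℂ) - r)⁻¹ * (a r * b (i - k - r))) :=
    fun k _ => Finset.mul_sum _ _ _
  rw [Finset.sum_congr rfl h1, ← swapIcc' i (fun r k => x k * (((ℓ:ℂ) - r)⁻¹ * (a r * b (i - k - r))))]
  apply Finset.sum_congr rfl
  intro r hr
  rw [mem_range] at hr
  have h2 : ∑ k ∈ Icc 1 (i-r), x k * (((ℓ:ℂ) - r)⁻¹ * (a r * b (i - k - r)))
      = ((ℓ:ℂ) - r)⁻¹ * (a r * ∑ k ∈ Icc 1 (i-r), x k * b ((i - r) - k)) := by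
    rw [Finset.mul_sum, Finset.mul_sum]
    apply Finset.sum_congr rfl
    intro k hk
    rw [mem_Icc] at hk
    rw [show i - k - r = i - r - k by omega]
    ring
  rw [h2]
  have h3 : ∑ k ∈ Icc 1 (i-r), x k * b ((i - r) - k) = -((((i-r:ℕ)):ℂ) * b (i-r)) := by
    rw [hrb (i-r)]
    rw [← Finset.sum_neg_distrib]
    apply Finset.sum_congr rfl
    intro k _
    ring
  rw [h3]
  ring

lemma uU (ℓ : ℕ) (ha : a 0 = 1) (hb : b 0 = 1)
    (hra : ∀ r : ℕ, (r:ℂ) * a r = ∑ k ∈ Icc 1 r, x k * a (r-k))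
    (hrb : ∀ r : ℕ, (r:ℂ) * b r = ∑ k ∈ Icc 1 r, (-x k) * b (r-k))
    (i : ℕ) (hi1 : 1 ≤ i) (hi : i < ℓ) :
    ∑ k ∈ Icc 1 i, x k * useq ℓ a b (i-k) = ((ℓ:ℂ) - i) * useq ℓ a b i := by
  rw [uSum x a b ℓ hrb i]
  have hterm : ∀ r ∈ range (i+1),
      ((ℓ:ℂ)-i) * (((ℓ:ℂ)-r)⁻¹ * (a r * b (i-r)))
        - ((ℓ:ℂ)-r)⁻¹ * (a r * (-((((i-r:ℕ)):ℂ)) * b (i-r))) = a r * b (i-r) := by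
    intro r hr
    rw [mem_range] at hr
    have hc : (((i-r:ℕ)):ℂ) = (i:ℂ) - r := by
      push_cast [Nat.cast_sub (by omega : r ≤ i)]; ring
    have hne : ((ℓ:ℂ) - r) ≠ 0 := by
      rw [sub_ne_zero]
      exact_mod_cast (by omega : ℓ ≠ r)
    rw [hc]
    field_simp
    ring
  have h2 : ((ℓ:ℂ) - i) * useq ℓ a b i
      - ∑ r ∈ range (i+1), ((ℓ:ℂ)-r)⁻¹ * (a r * (-((((i-r:ℕ)):ℂ)) * b (i-r)))
      = ∑ r ∈ range (i+1), a r * b (i-r) := by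
    unfold useq
    rw [Finset.mul_sum, ← Finset.sum_sub_distrib]
    exact Finset.sum_congr rfl hterm
  rw [convAB x a b ha hb hra hrb i, if_neg (by omega)] at h2
  have := sub_eq_zero.mp h2
  linear_combination -h2

lemma uFinal (ℓ : ℕ) (hℓ : 1 ≤ ℓ) (ha : a 0 = 1) (hb : b 0 = 1)
    (hra : ∀ r : ℕ, (r:ℂ) * a r = ∑ k ∈ Icc 1 r, x k * a (r-k))
    (hrb : ∀ r : ℕ, (r:ℂ) * b r = ∑ k ∈ Icc 1 r, (-x k) * b (r-k)) :
    ∑ k ∈ Icc 1 ℓ, x k * useq ℓ a b (ℓ-k) = a ℓ := by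
  rw [uSum x a b ℓ hrb ℓ]
  have hterm : ∀ r ∈ range (ℓ+1),
      ((ℓ:ℂ)-r)⁻¹ * (a r * (-((((ℓ-r:ℕ)):ℂ)) * b (ℓ-r)))
      = -(a r * b (ℓ-r)) + (if r = ℓ then a ℓ * b 0 else 0) := by
    intro r hr
    rw [mem_range] at hr
    rcases eq_or_lt_of_le (by omega : r ≤ ℓ) with rfl | hlt
    · rw [if_pos rfl]
      simp
    · rw [if_neg (by omega)]
      have hc : (((ℓ-r:ℕ)):ℂ) = (ℓ:ℂ) - r := by
        push_cast [Nat.cast_sub (by omega : r ≤ ℓ)]; ring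
      have hne : ((ℓ:ℂ) - r) ≠ 0 := by
        rw [sub_ne_zero]
        exact_mod_cast (by omega : ℓ ≠ r)
      rw [hc]
      field_simp
      ring
  rw [Finset.sum_congr rfl hterm, Finset.sum_add_distrib, Finset.sum_neg_distrib,
    convAB x a b ha hb hra hrb ℓ, if_neg (by omega), Finset.sum_ite_eq' (range (ℓ+1)) ℓ,
    if_pos (by rw [mem_range]; omega), hb]
  ring


noncomputable def pc (x : ℕ → ℂ) (ℓ : ℕ) : ℕ → ℕ → ℂ
  | 0, t => -x t
  | (j+1), t => -x (t-(j+1)) * pc x ℓ j (j+1) - ((ℓ:ℂ) - ((j+1:ℕ):ℂ)) * pc x ℓ j t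

lemma TsumDiag (i : ℕ) (u : ℕ → ℂ) :
    ∑ m ∈ Icc 1 i, x (i-m+1) * u (m-1) = ∑ k ∈ Icc 1 i, x k * u (i-k) := by
  apply Finset.sum_nbij' (fun m => i-m+1) (fun k => i-k+1)
  · intro m hm; rw [mem_Icc] at hm ⊢; omega
  · intro m hm; rw [mem_Icc] at hm ⊢; omega
  · intro m hm; rw [mem_Icc] at hm; omega
  · intro m hm; rw [mem_Icc] at hm; omega
  · intro m hm
    rw [mem_Icc] at hm
    rw [show i - (i - m + 1) = m - 1 by omega]

lemma useq_zero (ℓ : ℕ) (ha : a 0 = 1) (hb : b 0 = 1) : useq ℓ a b 0 = ((ℓ:ℂ))⁻¹ := by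
  unfold useq
  simp [ha, hb]

lemma pcClosed (ℓ : ℕ) (ha : a 0 = 1) (hb : b 0 = 1)
    (hra : ∀ r : ℕ, (r:ℂ) * a r = ∑ k ∈ Icc 1 r, x k * a (r-k))
    (hrb : ∀ r : ℕ, (r:ℂ) * b r = ∑ k ∈ Icc 1 r, (-x k) * b (r-k)) :
    ∀ j t, j+1 ≤ ℓ → j+1 ≤ t →
    pc x ℓ j t = (-1)^(j+1) * ((ℓ.descFactorial (j+1) : ℕ) : ℂ)
      * ∑ m ∈ Icc 1 (j+1), x (t-m+1) * useq ℓ a b (m-1) := by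
  intro j
  induction j with
  | zero =>
    intro t hl ht
    show -x t = _
    rw [show Icc 1 1 = {1} from rfl, Finset.sum_singleton,
      show t - 1 + 1 = t by omega, useq_zero a b ℓ ha hb]
    have hne : ((ℓ:ℂ)) ≠ 0 := Nat.cast_ne_zero.mpr (by omega)
    rw [Nat.descFactorial_one]
    field_simp
    ring
  | succ j ih =>
    intro t hl ht
    show -x (t-(j+1)) * pc x ℓ j (j+1) - ((ℓ:ℂ) - ((j+1:ℕ):ℂ)) * pc x ℓ j t = _
    rw [ih (j+1) (by omega) le_rfl, ih t (by omega) (by omega)]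
    rw [TsumDiag x (j+1) (fun m => useq ℓ a b m)]
    rw [uU x a b ℓ ha hb hra hrb (j+1) (by omega) (by omega)]
    have hIcc : Icc 1 (j+2) = insert (j+2) (Icc 1 (j+1)) := by
      ext y; simp only [mem_Icc, mem_insert]; omega
    rw [hIcc, Finset.sum_insert (by simp)]
    rw [show t - (j+2) + 1 = t - (j+1) by omega]
    rw [show (j+2) - 1 = j+1 by omega]
    rw [Nat.descFactorial_succ ℓ (j+1)]
    have hcast : (((ℓ - (j+1)) * ℓ.descFactorial (j+1) : ℕ) : ℂ)
        = ((ℓ:ℂ) - ((j+1:ℕ):ℂ)) * ((ℓ.descFactorial (j+1) : ℕ) : ℂ) := by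
      push_cast [Nat.cast_sub (by omega : j+1 ≤ ℓ)]
      ring
    rw [hcast]
    push_cast
    ring

lemma pcFinal (ℓ : ℕ) (hℓ : 1 ≤ ℓ) (ha : a 0 = 1) (hb : b 0 = 1)
    (hra : ∀ r : ℕ, (r:ℂ) * a r = ∑ k ∈ Icc 1 r, x k * a (r-k))
    (hrb : ∀ r : ℕ, (r:ℂ) * b r = ∑ k ∈ Icc 1 r, (-x k) * b (r-k)) :
    pc x ℓ (ℓ-1) ℓ = (-1)^ℓ * ((ℓ.factorial : ℕ) : ℂ) * a ℓ := by
  have h1 := pcClosed x a b ℓ ha hb hra hrb (ℓ-1) ℓ (by omega) (by omega)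
  rw [show ℓ - 1 + 1 = ℓ by omega] at h1
  rw [h1, TsumDiag x ℓ (fun m => useq ℓ a b m),
    uFinal x a b ℓ hℓ ha hb hra hrb, Nat.descFactorial_self]

end Scalars


section Fock
open Finset
variable {V : Type} [AddCommGroup V] [Module ℂ V] (M : CliffordFock V)

noncomputable def PL (L : List ℕ) : Module.End ℂ V :=
  (L.map (fun n => M.ψp (-(n + 1 : ℤ)))).prod

lemma PL_nil : PL M ([] : List ℕ) = 1 := rfl

lemma PL_cons (n : ℕ) (L : List ℕ) : PL M (n :: L) = M.ψp (-(n + 1 : ℤ)) * PL M L := by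
  simp [PL]

lemma psim_psip (m t : ℤ) (v : V) :
    M.ψm m (M.ψp t v) = (if t + m + 1 = 0 then v else 0) - M.ψp t (M.ψm m v) := by
  have h := congrArg (fun f : Module.End ℂ V => f v) (M.anti_pm t m)
  simp only [LinearMap.add_apply, Module.End.mul_apply] at h
  by_cases hc : t + m + 1 = 0
  · rw [if_pos hc] at h ⊢
    simp only [Module.End.one_apply] at h
    linear_combination (norm := module) h
  · rw [if_neg hc] at h ⊢
    simp only [LinearMap.zero_apply] at h
    linear_combination (norm := module) h

lemma psim_vanish (L : List ℕ) (m : ℤ) (hm : 0 ≤ m) (h : ∀ n ∈ L, (n:ℤ) ≠ m) :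
    M.ψm m (PL M L M.vac) = 0 := by
  induction L with
  | nil => simpa [PL_nil] using M.vac_m m hm
  | cons a L ih =>
    rw [PL_cons, Module.End.mul_apply, psim_psip]
    rw [if_neg (by have := h a (List.mem_cons_self); omega)]
    rw [ih (fun n hn => h n (List.mem_cons_of_mem a hn)), map_zero, zero_sub, neg_eq_zero]

lemma psim_killHead (t : ℕ) (L : List ℕ) (h : ∀ n ∈ L, n ≠ t) :
    M.ψm (t:ℤ) (PL M (t :: L) M.vac) = PL M L M.vac := by
  rw [PL_cons, Module.End.mul_apply, psim_psip, if_pos (by ring)]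
  rw [psim_vanish M L t (by positivity) (fun n hn => by exact_mod_cast h n hn), map_zero,
    sub_zero]

lemma psim_skipHead (m : ℤ) (t : ℕ) (h : m ≠ (t:ℤ)) (L : List ℕ) :
    M.ψm m (PL M (t :: L) M.vac) = - M.ψp (-(t + 1 : ℤ)) (M.ψm m (PL M L M.vac)) := by
  rw [PL_cons, Module.End.mul_apply, psim_psip, if_neg (by omega), zero_sub]

/-- the list `[j, j-1, ..., 1]`. -/
def RR (j : ℕ) : List ℕ := (List.range' 1 j).reverse

lemma RR_succ (j : ℕ) : RR (j+1) = (j+1) :: RR j := by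
  unfold RR
  rw [List.range'_concat, List.reverse_append]
  simp [Nat.add_comm]

lemma RR_mem {n j : ℕ} (h : n ∈ RR j) : 1 ≤ n ∧ n ≤ j := by
  unfold RR at h
  rw [List.mem_reverse, List.mem_range'] at h
  omega

noncomputable def WW (j t : ℕ) : V := PL M (t :: RR j) M.vac

lemma psim_WW_top (j t : ℕ) (hjt : j < t) :
    M.ψm (t:ℤ) (WW M j t) = PL M (RR j) M.vac := by
  apply psim_killHead
  intro n hn
  have := RR_mem hn
  omega

lemma psim_WW_mid (j t : ℕ) (hj : 1 ≤ j) (hjt : j < t) :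
    M.ψm (j:ℤ) (WW M j t) = -(WW M (j-1) t) := by
  unfold WW
  rw [psim_skipHead M (j:ℤ) t (by exact_mod_cast (by omega : j ≠ t))]
  obtain ⟨j', rfl⟩ : ∃ j', j = j'+1 := ⟨j-1, by omega⟩
  rw [RR_succ, psim_killHead M (j'+1) (RR j') (fun n hn => by have := RR_mem hn; omega)]
  rw [show j'+1-1 = j' from rfl, ← Module.End.mul_apply, ← PL_cons]

lemma psim_WW_zero (j t : ℕ) (m : ℤ) (hm : 0 ≤ m) (hmt : m ≠ (t:ℤ))
    (hmj : ∀ n : ℕ, 1 ≤ n → n ≤ j → m ≠ (n:ℤ)) :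
    M.ψm m (WW M j t) = 0 := by
  apply psim_vanish M _ m hm
  intro n hn
  rcases List.mem_cons.mp hn with rfl | hn'
  · omega
  · have := RR_mem hn'
    exact fun hc => hmj n this.1 this.2 hc.symm

end Fock

section Steps
open Finset
variable {V : Type} [AddCommGroup V] [Module ℂ V] (M : CliffordFock V)
variable (ℓ : ℕ) (χ : ℕ → ℂ) (Gm : ℤ → Module.End ℂ V)

lemma stepBase (hGm : IsGmFamily M (ℓ : ℤ) χ Gm) (t : ℕ) (ht : 1 ≤ t) :
    Gm 1 (WW M 0 t) = χ t • M.vac := by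
  obtain ⟨N, hN⟩ := hGm 1 (WW M 0 t)
  rw [hN (max N t) (le_max_left _ _)]
  have h1 : M.ψm (1 - 1 : ℤ) (WW M 0 t) = 0 := by
    rw [show (1:ℤ) - 1 = 0 from rfl]
    exact psim_WW_zero M 0 t 0 le_rfl (by exact_mod_cast (by omega : (0:ℤ) ≠ (t:ℤ)))
      (fun n h1 h2 => by omega)
  rw [h1, smul_zero, zero_add]
  rw [Finset.sum_eq_single_of_mem t (by rw [mem_Icc]; omega)]
  · rw [show (t:ℤ) + 1 - 1 = (t:ℤ) by ring, psim_WW_top M 0 t (by omega)]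
    rfl
  · intro n hn hne
    rw [mem_Icc] at hn
    rw [show (n:ℤ) + 1 - 1 = (n:ℤ) by ring,
      psim_WW_zero M 0 t n (by positivity)
        (by exact_mod_cast (by omega : (n:ℤ) ≠ (t:ℤ))) (fun k h1 h2 => by omega),
      smul_zero]

lemma stepInd (hGm : IsGmFamily M (ℓ : ℤ) χ Gm) (j t : ℕ) (hj : 1 ≤ j) (hjt : j + 1 ≤ t) :
    Gm ((j:ℤ)+1) (WW M j t)
      = χ (t - j) • WW M (j-1) j - (((ℓ:ℤ) - (j:ℤ) : ℤ):ℂ) • WW M (j-1) t := by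
  obtain ⟨N, hN⟩ := hGm ((j:ℤ)+1) (WW M j t)
  rw [hN (max N t) (le_max_left _ _)]
  have h1 : M.ψm ((j:ℤ) + 1 - 1) (WW M j t) = -(WW M (j-1) t) := by
    rw [show (j:ℤ) + 1 - 1 = (j:ℤ) by ring]
    exact psim_WW_mid M j t hj (by omega)
  rw [h1]
  have h2 : ∑ n ∈ Icc 1 (max N t), χ n • M.ψm ((n:ℤ) + ((j:ℤ)+1) - 1) (WW M j t)
      = χ (t - j) • WW M (j-1) j := by
    rw [Finset.sum_eq_single_of_mem (t - j) (by rw [mem_Icc]; omega)]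
    · rw [show (((t-j:ℕ)):ℤ) + ((j:ℤ)+1) - 1 = (t:ℤ) by push_cast [Nat.cast_sub (by omega : j ≤ t)]; ring]
      rw [psim_WW_top M j t (by omega)]
      congr 1
      unfold WW
      obtain ⟨j', rfl⟩ : ∃ j', j = j'+1 := ⟨j-1, by omega⟩
      rw [RR_succ]
      rfl
    · intro n hn hne
      rw [mem_Icc] at hn
      rw [show (n:ℤ) + ((j:ℤ)+1) - 1 = ((n:ℤ)+(j:ℤ)) by ring,
        psim_WW_zero M j t ((n:ℤ)+(j:ℤ)) (by positivity)
          (by omega) (fun k h1 h2 => by omega),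
        smul_zero]
  rw [h2]
  have h3 : (((ℓ:ℤ) + 1 - ((j:ℤ)+1) : ℤ) : ℂ) = (((ℓ:ℤ) - (j:ℤ) : ℤ):ℂ) := by push_cast; ring
  rw [h3]
  module

lemma prod_concat_apply (f : ℕ → Module.End ℂ V) (j : ℕ) (v : V) :
    ((List.range' 1 (j+1)).map f).prod v = ((List.range' 1 j).map f).prod (f (1+j) v) := by
  rw [List.range'_concat, List.map_append, List.prod_append]
  simp [Module.End.mul_apply]

lemma mainInd (hGm : IsGmFamily M (ℓ : ℤ) χ Gm) :
    ∀ j t : ℕ, j + 1 ≤ t →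
      (((List.range' 1 (j+1)).map (fun n : ℕ => Gm (n:ℤ))).prod) (WW M j t)
        = pc (fun k => -χ k) ℓ j t • M.vac := by
  intro j
  induction j with
  | zero =>
    intro t ht
    show (List.map (fun n : ℕ => Gm (n:ℤ)) [1]).prod (WW M 0 t) = _
    rw [List.map_singleton, List.prod_singleton]
    rw [show ((1:ℕ):ℤ) = (1:ℤ) from rfl, stepBase M ℓ χ Gm hGm t ht]
    show _ = (- -χ t) • M.vac
    rw [neg_neg]
  | succ j ih =>
    intro t ht
    rw [prod_concat_apply]
    rw [show ((1 + (j+1) : ℕ) : ℤ) = ((j+1 : ℕ):ℤ) + 1 by push_cast; ring]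
    rw [stepInd M ℓ χ Gm hGm (j+1) t (by omega) (by omega)]
    rw [map_sub, map_smul, map_smul]
    rw [show (j+1) - 1 = j from rfl]
    rw [ih (j+1) le_rfl, ih t (by omega)]
    rw [smul_smul, smul_smul, ← sub_smul]
    congr 1
    show _ = -(fun k => -χ k) (t-(j+1)) * pc _ ℓ j (j+1) - ((ℓ:ℂ) - (((j+1):ℕ):ℂ)) * pc _ ℓ j t
    push_cast
    ring

end Steps

theorem G_action_on_Omega_eq_schur (M : CliffordFock V)
    (S : ℕ → MvPolynomial ℕ ℚ) (hS : IsSchurFamily S)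
    (ℓ : ℕ) (hℓ : 1 ≤ ℓ) (χ : ℕ → ℂ)
    (Gm : ℤ → Module.End ℂ V) (hGm : IsGmFamily M (ℓ : ℤ) χ Gm) :
    (((List.range' 1 ℓ).map Gm).prod) (M.Omega ℓ) =
      ((-1 : ℂ) ^ ℓ * (ℓ.factorial : ℂ) *
        MvPolynomial.aeval (fun n : ℕ => -χ n) (S ℓ)) • M.vac := by
  classical
  set x : ℕ → ℂ := fun k => -χ k with hx
  set a : ℕ → ℂ := fun r => MvPolynomial.aeval (fun n : ℕ => -χ n) (S r) with hadef
  set b : ℕ → ℂ := fun r => MvPolynomial.aeval χ (S r) with hbdef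
  have ha : a 0 = 1 := by rw [hadef]; simp [schur_zero hS]
  have hb : b 0 = 1 := by rw [hbdef]; simp [schur_zero hS]
  have hra : ∀ r : ℕ, (r:ℂ) * a r = ∑ k ∈ Finset.Icc 1 r, x k * a (r-k) := by
    intro r
    rcases Nat.eq_zero_or_pos r with rfl | hr
    · simp
    · have h := congrArg (MvPolynomial.aeval (fun n : ℕ => -χ n)) (schur_rec hS r hr)
      rw [map_smul, map_sum, Rat.smul_def, Rat.cast_natCast] at h
      rw [hadef]
      simp only []
      rw [h]
      apply Finset.sum_congr rfl
      intro k _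
      rw [map_mul, MvPolynomial.aeval_X]
  have hrb : ∀ r : ℕ, (r:ℂ) * b r = ∑ k ∈ Finset.Icc 1 r, (-x k) * b (r-k) := by
    intro r
    rcases Nat.eq_zero_or_pos r with rfl | hr
    · simp
    · have h := congrArg (MvPolynomial.aeval χ) (schur_rec hS r hr)
      rw [map_smul, map_sum, Rat.smul_def, Rat.cast_natCast] at h
      rw [hbdef]
      simp only []
      rw [h]
      apply Finset.sum_congr rfl
      intro k _
      rw [map_mul, MvPolynomial.aeval_X, hx]
      simp
  have key := pcFinal x a b ℓ hℓ ha hb hra hrb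
  have hmain := mainInd M ℓ χ Gm hGm (ℓ-1) ℓ (by omega)
  have hΩ : M.Omega ℓ = WW M (ℓ-1) ℓ := by
    unfold CliffordFock.Omega WW PL RR
    obtain ⟨l', rfl⟩ : ∃ l', ℓ = l'+1 := ⟨ℓ-1, by omega⟩
    rw [show l'+1-1 = l' from rfl, List.range'_concat, List.reverse_append]
    simp [Nat.add_comm]
  rw [hΩ]
  rw [show List.range' 1 ℓ = List.range' 1 ((ℓ-1)+1) from by congr 1; omega]
  refine Eq.trans ?_ (hmain.trans ?_)
  · congr 2
    have hgen : ∀ l : List ℕ,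
        (List.map Gm (do let a ← l; pure ((a:ℤ)))) = List.map (fun n : ℕ => Gm (n:ℤ)) l := by
      intro l
      induction l with
      | nil => rfl
      | cons h t ih => simpa using ih
    exact hgen _
  · rw [key]
end

section
/- Let q be a positive integer and define G^-(n - 1/2) = -(q + n) Psi^-(n - 1/2) + sum_{k>=1} chi_{-k} Psi^-(k + n - 1/2) acting on the Clifford module F, and G^+(i - 1/2) = -i Psi^+(i - 1/2). Then the vector Psi^-(-q - 1/2) 1 does not lie in the subspace U(A).1 generated from the vacuum by all the operators G^±(r), r in 1/2 + Z, together with scalars. In particular the module generated by 1 is a proper submodule. -/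
variable {V : Type} [AddCommGroup V] [Module ℂ V]

noncomputable def nuAux (q : ℕ) (χ : ℕ → ℂ) (j : ℕ) : ℂ :=
  if _h : j ≤ q then (if j = q then 1 else 0)
  else -(((j : ℂ) - (q : ℂ))⁻¹) * ∑ n ∈ Finset.range j, χ (n + 1) * nuAux q χ (j - (n + 1))
termination_by j
decreasing_by omega

lemma nuAux_of_lt (q : ℕ) (χ : ℕ → ℂ) {j : ℕ} (h : j < q) : nuAux q χ j = 0 := by
  rw [nuAux]
  rw [dif_pos (le_of_lt h), if_neg (Nat.ne_of_lt h)]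

lemma nuAux_self (q : ℕ) (χ : ℕ → ℂ) : nuAux q χ q = 1 := by
  rw [nuAux]
  rw [dif_pos le_rfl, if_pos rfl]

lemma nuAux_rel (q : ℕ) (χ : ℕ → ℂ) (d : ℤ) (N : ℕ) (hN : -d < (N : ℤ)) :
    ∑ t ∈ Finset.range N, nuAux q χ t *
      ((if (t : ℤ) + d = 0 then ((-(q : ℤ) - d : ℤ) : ℂ) else 0) +
        (if 0 < -d - (t : ℤ) then χ (-d - (t : ℤ)).toNat else 0)) = 0 := by
  rcases lt_or_ge (-d) 0 with hd | hd
  · refine Finset.sum_eq_zero fun t ht => ?_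
    have h1 : ¬((t : ℤ) + d = 0) := by omega
    have h2 : ¬(0 < -d - (t : ℤ)) := by omega
    rw [if_neg h1, if_neg h2, add_zero, mul_zero]
  · set j := (-d).toNat with hjdef
    have hjd : (j : ℤ) = -d := Int.toNat_of_nonneg hd
    have hjN : j < N := by omega
    have hsplit : ∀ t ∈ Finset.range N,
        nuAux q χ t * ((if (t : ℤ) + d = 0 then ((-(q : ℤ) - d : ℤ) : ℂ) else 0) +
          (if 0 < -d - (t : ℤ) then χ (-d - (t : ℤ)).toNat else 0))
        = (if t = j then nuAux q χ t * ((j : ℂ) - (q : ℂ)) else 0)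
          + (if t < j then nuAux q χ t * χ (j - t) else 0) := by
      intro t _
      rw [mul_add]
      congr 1
      · rcases eq_or_ne t j with h | h
        · have hc : (t : ℤ) + d = 0 := by omega
          rw [if_pos hc, if_pos h]
          congr 1
          have h2 : (-(q : ℤ) - d) = ((j : ℤ) - (q : ℤ)) := by omega
          rw [h2]
          push_cast
          ring
        · have hc : ¬((t : ℤ) + d = 0) := by omega
          rw [if_neg hc, if_neg h, mul_zero]
      · rcases lt_or_ge t j with h | h
        · have hc : 0 < -d - (t : ℤ) := by omega
          have hc2 : (-d - (t : ℤ)).toNat = j - t := by omega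
          rw [if_pos hc, if_pos h, hc2]
        · have hc : ¬(0 < -d - (t : ℤ)) := by omega
          rw [if_neg hc, if_neg (not_lt.mpr h), mul_zero]
    rw [Finset.sum_congr rfl hsplit, Finset.sum_add_distrib,
      Finset.sum_ite_eq' (Finset.range N) j, if_pos (Finset.mem_range.mpr hjN)]
    have hsum2 : ∑ t ∈ Finset.range N, (if t < j then nuAux q χ t * χ (j - t) else 0)
        = ∑ t ∈ Finset.range j, nuAux q χ t * χ (j - t) := by
      rw [← Finset.sum_subset (Finset.range_subset_range.mpr hjN.le)
        (fun t _ hts => if_neg (fun h => hts (Finset.mem_range.mpr h)))]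
      exact Finset.sum_congr rfl fun t ht => if_pos (Finset.mem_range.mp ht)
    rw [hsum2]
    rcases lt_trichotomy j q with h | h | h
    · rw [nuAux_of_lt q χ h, zero_mul, zero_add]
      exact Finset.sum_eq_zero fun t ht =>
        by rw [nuAux_of_lt q χ (lt_trans (Finset.mem_range.mp ht) h), zero_mul]
    · rw [h, sub_self, mul_zero, zero_add]
      exact Finset.sum_eq_zero fun t ht =>
        by rw [nuAux_of_lt q χ (Finset.mem_range.mp ht), zero_mul]
    · have hne : ((j : ℂ) - (q : ℂ)) ≠ 0 := by
        have hqj : (q : ℂ) ≠ (j : ℂ) := by exact_mod_cast (Nat.ne_of_lt h)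
        intro hz
        exact hqj (sub_eq_zero.mp hz).symm
      have hrec : nuAux q χ j
          = -(((j : ℂ) - (q : ℂ))⁻¹) * ∑ n ∈ Finset.range j, χ (n + 1) * nuAux q χ (j - (n + 1)) := by
        rw [nuAux]
        rw [dif_neg (by omega : ¬ j ≤ q)]
      have hreflect : ∑ n ∈ Finset.range j, χ (n + 1) * nuAux q χ (j - (n + 1))
          = ∑ t ∈ Finset.range j, nuAux q χ t * χ (j - t) := by
        rw [← Finset.sum_range_reflect (fun n => χ (n + 1) * nuAux q χ (j - (n + 1))) j]
        refine Finset.sum_congr rfl fun n hn => ?_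
        have hn' := Finset.mem_range.mp hn
        have h1 : j - 1 - n + 1 = j - n := by omega
        have h2 : j - (j - n) = n := by omega
        rw [h1, h2, mul_comm]
      rw [hrec, hreflect]
      field_simp
      ring

theorem vacuum_module_proper (M : CliffordFock V) (q : ℕ) (hq : 1 ≤ q) (χ : ℕ → ℂ)
    (Gp : ℤ → Module.End ℂ V)
    (hGp : ∀ i : ℤ, Gp i = ((-i : ℤ) : ℂ) • M.ψp (i - 1))
    (Gm : ℤ → Module.End ℂ V)
    -- `G⁻(n - 1/2) = -(q + n) Ψ⁻(n - 1/2) + ∑_{k ≥ 1} χ_{-k} Ψ⁻(k + n - 1/2)`,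
    -- i.e. the coefficient `ℓ + 1 - n` with `ℓ = -q - 1`:
    (hGm : IsGmFamily M (-(q : ℤ) - 1) χ Gm) :
    M.ψm (-(q + 1 : ℤ)) M.vac ∉
      Submodule.span ℂ {v : V | ∃ L : List (Module.End ℂ V),
        (∀ g ∈ L, (∃ r : ℤ, g = Gp r) ∨ ∃ r : ℤ, g = Gm r) ∧ v = L.prod M.vac} := by
  intro hmem
  classical
  let A : ℕ → Module.End ℂ V := fun N => ∑ t ∈ Finset.range N, nuAux q χ t • M.ψp (t : ℤ)
  have hA : ∀ (N : ℕ) (v : V), A N v = ∑ t ∈ Finset.range N, nuAux q χ t • M.ψp (t : ℤ) v := by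
    intro N v
    simp only [A, LinearMap.sum_apply, LinearMap.smul_apply]
  let K : Submodule ℂ V :=
    { carrier := {v | ∃ N₀ : ℕ, ∀ N, N₀ ≤ N → A N v = 0}
      add_mem' := by
        rintro a b ⟨Na, ha⟩ ⟨Nb, hb⟩
        exact ⟨max Na Nb, fun N hN => by
          rw [map_add, ha N (le_trans (le_max_left _ _) hN),
            hb N (le_trans (le_max_right _ _) hN), add_zero]⟩
      zero_mem' := ⟨0, fun N _ => map_zero _⟩
      smul_mem' := by
        rintro c a ⟨Na, ha⟩
        exact ⟨Na, fun N hN => by rw [map_smul, ha N hN, smul_zero]⟩ }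
  -- vacuum is in K
  have hvac : M.vac ∈ K := by
    refine ⟨0, fun N _ => ?_⟩
    rw [hA]
    refine Finset.sum_eq_zero fun t _ => ?_
    rw [M.vac_p (t : ℤ) (Int.natCast_nonneg t), smul_zero]
  -- ψp stability
  have hψpK : ∀ (m : ℤ) (v : V), v ∈ K → M.ψp m v ∈ K := by
    rintro m v ⟨N₀, h₀⟩
    refine ⟨N₀, fun N hN => ?_⟩
    have hswap : ∀ t : ℤ, M.ψp t (M.ψp m v) = -(M.ψp m (M.ψp t v)) := by
      intro t
      have h := DFunLike.congr_fun (M.anti_pp t m) v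
      simp only [LinearMap.add_apply, Module.End.mul_apply, LinearMap.zero_apply] at h
      exact eq_neg_of_add_eq_zero_left h
    rw [hA]
    have hterm : ∀ t ∈ Finset.range N,
        nuAux q χ t • M.ψp (t : ℤ) (M.ψp m v)
          = -(nuAux q χ t • M.ψp m (M.ψp (t : ℤ) v)) := by
      intro t _
      rw [hswap, smul_neg]
    rw [Finset.sum_congr rfl hterm, Finset.sum_neg_distrib]
    have hpull : ∑ t ∈ Finset.range N, nuAux q χ t • M.ψp m (M.ψp (t : ℤ) v)
        = M.ψp m (A N v) := by
      rw [hA, map_sum]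
      exact Finset.sum_congr rfl fun t _ => (map_smul _ _ _).symm
    rw [hpull, h₀ N hN, map_zero, neg_zero]
  -- basic pm relation, applied
  have hpm : ∀ (m s : ℤ) (w : V),
      M.ψp m (M.ψm s w) = (if m + s + 1 = 0 then w else 0) - M.ψm s (M.ψp m w) := by
    intro m s w
    have h := DFunLike.congr_fun (M.anti_pm m s) w
    simp only [LinearMap.add_apply, Module.End.mul_apply] at h
    have h2 : (if m + s + 1 = 0 then (1 : Module.End ℂ V) else 0) w
        = (if m + s + 1 = 0 then w else 0) := by
      split <;> simp
    rw [h2] at h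
    exact eq_sub_of_add_eq h
  -- anticommutation of ψp with Gm, pointwise
  have hAC : ∀ (d m : ℤ) (v : V),
      M.ψp m (Gm d v)
        = ((if m + d = 0 then ((-(q : ℤ) - d : ℤ) : ℂ) else 0)
            + (if 0 < -d - m then χ (-d - m).toNat else 0)) • v
          - Gm d (M.ψp m v) := by
    intro d m v
    obtain ⟨N₁, h₁⟩ := hGm d v
    obtain ⟨N₂, h₂⟩ := hGm d (M.ψp m v)
    set N : ℕ := max (max N₁ N₂) (-d - m).toNat with hNdef
    have e₁ := h₁ N (le_trans (le_max_left _ _) (le_max_left _ _))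
    have e₂ := h₂ N (le_trans (le_max_right _ _) (le_max_left _ _))
    rw [e₁, e₂]
    rw [map_add, map_smul, map_sum]
    rw [hpm m (d - 1) v]
    have hterm : ∀ n ∈ Finset.Icc 1 N,
        M.ψp m (χ n • M.ψm ((n : ℤ) + d - 1) v)
          = (if (n : ℤ) = -d - m then χ n else 0) • v
            - χ n • M.ψm ((n : ℤ) + d - 1) (M.ψp m v) := by
      intro n _
      rw [map_smul, hpm m ((n : ℤ) + d - 1) v, smul_sub]
      congr 1
      by_cases hcond : m + ((n : ℤ) + d - 1) + 1 = 0
      · rw [if_pos hcond, if_pos (by omega : (n : ℤ) = -d - m)]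
      · rw [if_neg hcond, if_neg (by omega : ¬ (n : ℤ) = -d - m), smul_zero, zero_smul]
    rw [Finset.sum_congr rfl hterm, Finset.sum_sub_distrib]
    have hsum : ∑ n ∈ Finset.Icc 1 N, (if (n : ℤ) = -d - m then χ n else 0)
        = (if 0 < -d - m then χ (-d - m).toNat else 0) := by
      by_cases hpos : 0 < -d - m
      · have hmemN : (-d - m).toNat ∈ Finset.Icc 1 N := by
          rw [Finset.mem_Icc]
          refine ⟨by omega, ?_⟩
          rw [hNdef]
          exact le_max_right _ _
        rw [Finset.sum_eq_single ((-d - m).toNat)]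
        · rw [if_pos (by omega : ((((-d - m).toNat) : ℤ)) = -d - m), if_pos hpos]
        · intro n hn hne
          exact if_neg (by omega)
        · intro hab
          exact absurd hmemN hab
      · rw [if_neg hpos]
        refine Finset.sum_eq_zero fun n hn => ?_
        have h1 := (Finset.mem_Icc.mp hn).1
        exact if_neg (by omega)
    have hfirst : ((-(q : ℤ) - 1 + 1 - d : ℤ) : ℂ) • (if m + (d - 1) + 1 = 0 then v else 0)
        = (if m + d = 0 then ((-(q : ℤ) - d : ℤ) : ℂ) else 0) • v := by
      by_cases hcond : m + d = 0
      · rw [if_pos (by omega : m + (d - 1) + 1 = 0), if_pos hcond]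
        congr 2
        ring
      · rw [if_neg (by omega : ¬ m + (d - 1) + 1 = 0), if_neg hcond, smul_zero, zero_smul]
    rw [smul_sub, hfirst, ← Finset.sum_smul, hsum, add_smul]
    abel
  -- Gm stability
  have hGmK : ∀ (d : ℤ) (v : V), v ∈ K → Gm d v ∈ K := by
    rintro d v ⟨N₀, h₀⟩
    refine ⟨max N₀ ((-d).toNat + 1), fun N hN => ?_⟩
    have hN₀ : N₀ ≤ N := le_trans (le_max_left _ _) hN
    have hNd : -d < (N : ℤ) := by
      have h1 : (-d).toNat + 1 ≤ N := le_trans (le_max_right _ _) hN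
      omega
    rw [hA]
    have hterm : ∀ t ∈ Finset.range N,
        nuAux q χ t • M.ψp (t : ℤ) (Gm d v)
        = (nuAux q χ t * ((if (t : ℤ) + d = 0 then ((-(q : ℤ) - d : ℤ) : ℂ) else 0)
            + (if 0 < -d - (t : ℤ) then χ (-d - (t : ℤ)).toNat else 0))) • v
          - nuAux q χ t • Gm d (M.ψp (t : ℤ) v) := by
      intro t _
      rw [hAC d (t : ℤ) v, smul_sub, smul_smul]
    rw [Finset.sum_congr rfl hterm, Finset.sum_sub_distrib, ← Finset.sum_smul,
      nuAux_rel q χ d N hNd, zero_smul, zero_sub, neg_eq_zero]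
    have hpull : ∑ t ∈ Finset.range N, nuAux q χ t • Gm d (M.ψp (t : ℤ) v)
        = Gm d (A N v) := by
      rw [hA, map_sum]
      exact Finset.sum_congr rfl fun t _ => (map_smul _ _ _).symm
    rw [hpull, h₀ N hN₀, map_zero]
  -- the generating set is contained in K
  have hS : {v : V | ∃ L : List (Module.End ℂ V),
      (∀ g ∈ L, (∃ r : ℤ, g = Gp r) ∨ ∃ r : ℤ, g = Gm r) ∧ v = L.prod M.vac} ⊆ K := by
    rintro v ⟨L, hL, rfl⟩
    induction L with
    | nil => simpa using hvac
    | cons g L' ih =>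
      have hg := hL g (List.mem_cons_self)
      have hw : List.prod L' M.vac ∈ K := ih fun g' hg' => hL g' (List.mem_cons_of_mem _ hg')
      rw [List.prod_cons, Module.End.mul_apply]
      rcases hg with ⟨r, rfl⟩ | ⟨r, rfl⟩
      · rw [hGp r, LinearMap.smul_apply]
        exact K.smul_mem _ (hψpK _ _ hw)
      · exact hGmK r _ hw
  -- computing A N on the target vector
  have htar : ∀ N : ℕ, q < N → A N (M.ψm (-(q + 1 : ℤ)) M.vac) = M.vac := by
    intro N hN
    rw [hA]
    have hterm : ∀ t ∈ Finset.range N,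
        nuAux q χ t • M.ψp (t : ℤ) (M.ψm (-(q + 1 : ℤ)) M.vac)
          = if t = q then nuAux q χ t • M.vac else 0 := by
      intro t _
      rw [hpm (t : ℤ) (-(q + 1 : ℤ)) M.vac, M.vac_p (t : ℤ) (Int.natCast_nonneg t), map_zero,
        sub_zero]
      by_cases hc : (t : ℤ) + -(q + 1 : ℤ) + 1 = 0
      · rw [if_pos hc, if_pos (by omega : t = q)]
      · rw [if_neg hc, if_neg (by omega : ¬ t = q), smul_zero]
    rw [Finset.sum_congr rfl hterm, Finset.sum_ite_eq' (Finset.range N) q,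
      if_pos (Finset.mem_range.mpr hN), nuAux_self, one_smul]
  have hvacne : M.vac ≠ 0 := by
    have hb := M.basis_eq ∅ ∅
    have hb' : M.basis (∅, ∅) = M.vac := by simpa using hb
    rw [← hb']
    exact M.basis.ne_zero _
  have hmemK : M.ψm (-(q + 1 : ℤ)) M.vac ∈ K := Submodule.span_le.mpr hS hmem
  obtain ⟨N₀, h₀⟩ := hmemK
  have hcontr := h₀ (max N₀ (q + 1)) (le_max_left _ _)
  rw [htar _ (by have h1 := le_max_right N₀ (q + 1); omega)] at hcontr
  exact hvacne hcontr
end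

section
/- Let ell >= 0 and define G^-(n - 1/2) = (ell + 1 - n) Psi^-(n - 1/2) + sum_{k>=1} chi_{-k} Psi^-(k + n - 1/2) on the Clifford module F. Then for every N >= 0, G^-(-N - 1/2) G^-(-N + 1/2) ... G^-(-1/2) 1 = C * Psi^-(-N - 1/2) ... Psi^-(-1/2) 1, where C = (ell+1)(ell+2)...(ell+N+1) is nonzero. -/
variable {V : Type} [AddCommGroup V] [Module ℂ V]

noncomputable def vvCF (M : CliffordFock V) (k : ℕ) : V :=
  (((List.range k).reverse.map fun n => M.ψm (-(n + 1 : ℤ))).prod) M.vac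

lemma vvCF_succ (M : CliffordFock V) (k : ℕ) :
    vvCF M (k + 1) = M.ψm (-((k : ℤ) + 1)) (vvCF M k) := by
  simp [vvCF, List.range_succ, Module.End.mul_apply]

lemma psmCF_sq (M : CliffordFock V) (m : ℤ) : M.ψm m * M.ψm m = 0 := by
  have h := M.anti_mm m m
  rw [← two_smul ℂ] at h
  exact (smul_eq_zero.mp h).resolve_left (by norm_num)

lemma psmCF_kill (M : CliffordFock V) :
    ∀ (k : ℕ) (m : ℤ), -(k : ℤ) ≤ m → M.ψm m (vvCF M k) = 0 := by
  intro k
  induction k with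
  | zero => intro m hm; simpa [vvCF] using M.vac_m m (by simpa using hm)
  | succ k ih =>
    intro m hm
    rw [vvCF_succ]
    by_cases h : m = -((k : ℤ) + 1)
    · subst h
      rw [← Module.End.mul_apply, psmCF_sq]; simp
    · have hm' : -(k : ℤ) ≤ m := by
        push_cast at hm ⊢; omega
      have hc : M.ψm m * M.ψm (-((k : ℤ) + 1)) = -(M.ψm (-((k : ℤ) + 1)) * M.ψm m) :=
        eq_neg_of_add_eq_zero_left (M.anti_mm m (-((k : ℤ) + 1)))
      rw [← Module.End.mul_apply, hc]
      simp [Module.End.mul_apply, ih m hm']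

lemma GstepCF (M : CliffordFock V) (ℓ : ℕ) (χ : ℕ → ℂ) (Gm : ℤ → Module.End ℂ V)
    (hGm : IsGmFamily M (ℓ : ℤ) χ Gm) (N : ℕ) :
    Gm (-(N : ℤ)) (vvCF M N) = ((ℓ + (N + 1) : ℕ) : ℂ) • vvCF M (N + 1) := by
  obtain ⟨N₀, h⟩ := hGm (-(N : ℤ)) (vvCF M N)
  rw [h N₀ le_rfl]
  have hsum : ∀ n ∈ Finset.Icc 1 N₀, χ n • M.ψm ((n : ℤ) + (-(N : ℤ)) - 1) (vvCF M N) = 0 := by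
    intro n hn
    have hn1 : (1 : ℕ) ≤ n := (Finset.mem_Icc.mp hn).1
    have : M.ψm ((n : ℤ) + (-(N : ℤ)) - 1) (vvCF M N) = 0 := by
      apply psmCF_kill M N
      push_cast; omega
    rw [this, smul_zero]
  rw [Finset.sum_eq_zero hsum, add_zero, vvCF_succ]
  congr 1
  · push_cast; ring_nf
  · congr 1; ring

lemma prodneCF (ℓ N : ℕ) : (∏ j ∈ Finset.Icc 1 (N + 1), ((ℓ + j : ℕ) : ℂ)) ≠ 0 := by
  apply Finset.prod_ne_zero_iff.mpr
  intro j hj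
  have h1 := (Finset.mem_Icc.mp hj).1
  simp only [ne_eq, Nat.cast_eq_zero]
  omega

theorem Gminus_negative_modes_on_vacuum (M : CliffordFock V) (ℓ : ℕ) (χ : ℕ → ℂ)
    (Gm : ℤ → Module.End ℂ V) (hGm : IsGmFamily M (ℓ : ℤ) χ Gm) :
    ∀ N : ℕ,
      (((List.range (N + 1)).reverse.map fun n => Gm (-(n : ℤ))).prod) M.vac =
        (∏ j ∈ Finset.Icc 1 (N + 1), ((ℓ + j : ℕ) : ℂ)) •
          (((List.range (N + 1)).reverse.map fun n => M.ψm (-(n + 1 : ℤ))).prod) M.vac ∧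
      (∏ j ∈ Finset.Icc 1 (N + 1), ((ℓ + j : ℕ) : ℂ)) ≠ 0 := by
  intro N
  refine ⟨?_, prodneCF ℓ N⟩
  induction N with
  | zero =>
    have h0 : (((List.range 1).reverse.map fun n => Gm (-(n : ℤ))).prod) M.vac
        = Gm (-(0:ℕ) : ℤ) (vvCF M 0) := by
      rfl
    rw [h0, GstepCF M ℓ χ Gm hGm 0]
    simp [vvCF]
  | succ N ih =>
    have hL : (((List.range (N + 1 + 1)).reverse.map fun n => Gm (-(n : ℤ))).prod) M.vac
        = Gm (-((N + 1 : ℕ) : ℤ)) ((((List.range (N + 1)).reverse.map fun n => Gm (-(n : ℤ))).prod) M.vac) := by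
      rw [List.range_succ]
      simp [Module.End.mul_apply]
    rw [hL, ih]
    have hvv : (((List.range (N + 1)).reverse.map fun n => M.ψm (-(n + 1 : ℤ))).prod) M.vac = vvCF M (N + 1) := rfl
    rw [hvv, map_smul]
    have hg : Gm (-((N + 1 : ℕ) : ℤ)) (vvCF M (N + 1)) = ((ℓ + (N + 1 + 1) : ℕ) : ℂ) • vvCF M (N + 1 + 1) := by
      simpa using GstepCF M ℓ χ Gm hGm (N + 1)
    rw [hg, smul_smul]
    have hprod : (∏ j ∈ Finset.Icc 1 (N + 1 + 1), ((ℓ + j : ℕ) : ℂ))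
        = (∏ j ∈ Finset.Icc 1 (N + 1), ((ℓ + j : ℕ) : ℂ)) * ((ℓ + (N + 1 + 1) : ℕ) : ℂ) := by
      rw [Finset.prod_Icc_succ_top (by omega)]
    rw [hprod]
    rfl
end

section
/- Let P_r denote the set of strictly decreasing r-tuples (lambda_1 > ... > lambda_r >= 1/2) of half-odd-integers and Q_s the set of strictly decreasing s-tuples (mu_1 > ... > mu_s >= 3/2) of half-odd-integers. Then the vectors v_{lambda,mu} = Psi^-(-lambda_1)...Psi^-(-lambda_r) Psi^+(-mu_1)...Psi^+(-mu_s) 1, as (lambda, mu) ranges over all pairs (including empty tuples), are linearly independent in F, and they span the subspace F~ = Ker_F Psi^-(1/2). -/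
variable {V : Type} [AddCommGroup V] [Module ℂ V]

/-- `v_{λ,μ} = Ψ⁻(-λ₁)⋯Ψ⁻(-λ_r) Ψ⁺(-μ₁)⋯Ψ⁺(-μ_s) |0⟩`, where `λ` (resp. `μ`) is the
strictly decreasing tuple of half-odd integers `n + 1/2`, `n ∈ A` (resp. `n ∈ B`). -/
noncomputable def CliffordFock.vv (M : CliffordFock V) (A B : Finset ℕ) : V :=
  ((((A.sort (· ≤ ·)).reverse.map fun n => M.ψm (-(n + 1 : ℤ))).prod *
    ((B.sort (· ≤ ·)).reverse.map fun n => M.ψp (-(n + 1 : ℤ))).prod)) M.vac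

lemma map_coe_aux (g : ℤ → Module.End ℂ V) (l : List ℕ) :
    (l.map fun n => g (-(n + 1 : ℤ))) = l.map fun n : ℕ => g (-(n + 1 : ℤ)) := by
  simp only [List.pure_def, List.bind_eq_flatMap, ← List.map_eq_flatMap, List.map_map]
  rfl

lemma anticomm_prod (T : Module.End ℂ V) (L : List (Module.End ℂ V))
    (h : ∀ X ∈ L, T * X = -(X * T)) :
    T * L.prod = ((-1 : ℂ) ^ L.length) • (L.prod * T) := by
  induction L with
  | nil => simp
  | cons X L ih =>
    have hX := h X (List.mem_cons_self)
    have hL := ih (fun Y hY => h Y (List.mem_cons_of_mem _ hY))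
    simp only [List.prod_cons, List.length_cons]
    rw [← mul_assoc, hX, neg_mul, mul_assoc, hL, mul_smul_comm, pow_succ, mul_neg_one,
      neg_smul, mul_assoc]

lemma sort_of_mem_zero {B : Finset ℕ} (h0 : (0:ℕ) ∈ B) :
    B.sort (· ≤ ·) = 0 :: (B.erase 0).sort (· ≤ ·) := by
  refine (fun hp h2 => List.Perm.eq_of_pairwise' (Finset.pairwise_sort _ _) h2 hp) ?_ ?_
  · rw [← Multiset.coe_eq_coe, ← Multiset.cons_coe, Finset.sort_eq, Finset.sort_eq,
      Finset.erase_val, Multiset.cons_erase h0]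
  · exact List.pairwise_cons.mpr ⟨fun b _ => Nat.zero_le b, Finset.pairwise_sort _ _⟩

namespace CliffordFock
variable (M : CliffordFock V)

lemma basis_eq' (A B : Finset ℕ) :
    M.basis (A, B) =
      ((((A.sort (· ≤ ·)).reverse.map fun n : ℕ => M.ψm (-(n + 1 : ℤ))).prod *
        ((B.sort (· ≤ ·)).reverse.map fun n : ℕ => M.ψp (-(n + 1 : ℤ))).prod) M.vac) := by
  rw [M.basis_eq, map_coe_aux, map_coe_aux]

lemma psm0_basis (A B : Finset ℕ) :
    M.ψm 0 (M.basis (A, B)) =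
      if 0 ∈ B then ((-1 : ℂ) ^ (A.card + (B.erase 0).card)) • M.basis (A, B.erase 0)
      else 0 := by
  have hA : ∀ X ∈ (A.sort (· ≤ ·)).reverse.map fun n : ℕ => M.ψm (-(n + 1 : ℤ)),
      M.ψm 0 * X = -(X * M.ψm 0) := by
    intro X hX
    simp only [List.mem_map] at hX
    obtain ⟨n, -, rfl⟩ := hX
    exact eq_neg_of_add_eq_zero_left (M.anti_mm 0 _)
  have hp_anti : ∀ n : ℕ, n ≠ 0 → M.ψm 0 * M.ψp (-(n+1:ℤ)) = -(M.ψp (-(n+1:ℤ)) * M.ψm 0) := by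
    intro n hn
    have h := M.anti_pm (-(n+1:ℤ)) 0
    rw [if_neg (by omega)] at h
    exact eq_neg_of_add_eq_zero_right h
  by_cases h0 : 0 ∈ B
  · rw [if_pos h0, M.basis_eq', sort_of_mem_zero h0]
    set LA := (A.sort (· ≤ ·)).reverse.map fun n : ℕ => M.ψm (-(n + 1 : ℤ)) with hLA
    set LB' := ((B.erase 0).sort (· ≤ ·)).reverse.map fun n : ℕ => M.ψp (-(n + 1 : ℤ)) with hLB'
    have hall : ∀ X ∈ LA ++ LB', M.ψm 0 * X = -(X * M.ψm 0) := by
      intro X hX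
      rcases List.mem_append.1 hX with h | h
      · exact hA X h
      · rw [hLB'] at h
        simp only [List.mem_map, List.mem_reverse, Finset.mem_sort] at h
        obtain ⟨n, hn, rfl⟩ := h
        exact hp_anti n (Finset.ne_of_mem_erase hn)
    have hcomm := anticomm_prod (M.ψm 0) (LA ++ LB') hall
    have hlen : (LA ++ LB').length = A.card + (B.erase 0).card := by
      simp [hLA, hLB']
    have key : M.ψm 0 * M.ψp (-1) = 1 - M.ψp (-1) * M.ψm 0 := by
      have h := M.anti_pm (-1) 0
      rw [if_pos (by ring)] at h
      exact eq_sub_of_add_eq' h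
    have happ : (M.ψm 0 * M.ψp (-1)) M.vac = M.vac := by
      rw [key]
      simp [LinearMap.sub_apply, Module.End.mul_apply, Module.End.one_apply, M.vac_m 0 le_rfl]
    have e1 : (LA.prod * ((0 :: (B.erase 0).sort (· ≤ ·)).reverse.map
        fun n : ℕ => M.ψp (-(n + 1 : ℤ))).prod) = (LA ++ LB').prod * M.ψp (-1) := by
      simp only [List.reverse_cons, List.map_append, List.map_cons, List.map_nil,
        List.prod_append, List.prod_cons, List.prod_nil, mul_one, Nat.cast_zero, zero_add,
        ← hLB']
      rw [← mul_assoc]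
    rw [e1]
    show (M.ψm 0 * ((LA ++ LB').prod * M.ψp (-1))) M.vac = _
    rw [← mul_assoc, hcomm, smul_mul_assoc, mul_assoc, LinearMap.smul_apply,
      Module.End.mul_apply, happ, hlen, M.basis_eq', List.prod_append]
  · rw [if_neg h0, M.basis_eq']
    set LA := (A.sort (· ≤ ·)).reverse.map fun n : ℕ => M.ψm (-(n + 1 : ℤ)) with hLA
    set LB := (B.sort (· ≤ ·)).reverse.map fun n : ℕ => M.ψp (-(n + 1 : ℤ)) with hLB
    have hall : ∀ X ∈ LA ++ LB, M.ψm 0 * X = -(X * M.ψm 0) := by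
      intro X hX
      rcases List.mem_append.1 hX with h | h
      · exact hA X h
      · rw [hLB] at h
        simp only [List.mem_map, List.mem_reverse, Finset.mem_sort] at h
        obtain ⟨n, hn, rfl⟩ := h
        exact hp_anti n (fun hh => h0 (hh ▸ hn))
    have hcomm := anticomm_prod (M.ψm 0) (LA ++ LB) hall
    show (M.ψm 0 * (LA.prod * LB.prod)) M.vac = 0
    rw [← List.prod_append, hcomm, LinearMap.smul_apply, Module.End.mul_apply,
      M.vac_m 0 le_rfl, map_zero, smul_zero]

end CliffordFock

lemma CliffordFock.vv_eq_basis (M : CliffordFock V) (A B : Finset ℕ) :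
    M.vv A B = M.basis (A, B) := (M.basis_eq A B).symm

theorem basis_of_ker (M : CliffordFock V) :
    LinearIndependent ℂ
      (fun p : {q : Finset ℕ × Finset ℕ // ∀ b ∈ q.2, 1 ≤ b} => M.vv p.1.1 p.1.2) ∧
    Submodule.span ℂ
        {v : V | ∃ A B : Finset ℕ, (∀ b ∈ B, 1 ≤ b) ∧ v = M.vv A B} =
      LinearMap.ker (M.ψm 0) := by
  constructor
  · have h := M.basis.linearIndependent.comp
      (fun p : {q : Finset ℕ × Finset ℕ // ∀ b ∈ q.2, 1 ≤ b} => p.1) Subtype.val_injective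
    have he : (fun p : {q : Finset ℕ × Finset ℕ // ∀ b ∈ q.2, 1 ≤ b} => M.vv p.1.1 p.1.2) =
        (M.basis ∘ fun p : {q : Finset ℕ × Finset ℕ // ∀ b ∈ q.2, 1 ≤ b} => p.1) := by
      funext p
      simp only [Function.comp_apply, M.vv_eq_basis]
    rw [he]
    exact h
  · have hset : {v : V | ∃ A B : Finset ℕ, (∀ b ∈ B, 1 ≤ b) ∧ v = M.vv A B} =
        M.basis '' {p : Finset ℕ × Finset ℕ | 0 ∉ p.2} := by
      ext v
      constructor
      · rintro ⟨A, B, hB, rfl⟩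
        exact ⟨(A, B), fun h0 => by simpa using hB 0 h0, (M.vv_eq_basis A B).symm⟩
      · rintro ⟨⟨A, B⟩, hp, rfl⟩
        exact ⟨A, B, fun b hb => Nat.one_le_iff_ne_zero.mpr (fun h => hp (h ▸ hb)),
          (M.vv_eq_basis A B).symm⟩
    rw [hset]
    apply le_antisymm
    · rw [Submodule.span_le]
      rintro v ⟨⟨A, B⟩, hp, rfl⟩
      simp only [SetLike.mem_coe, LinearMap.mem_ker]
      have h := M.psm0_basis A B
      rwa [if_neg hp] at h
    · intro x hx
      rw [LinearMap.mem_ker] at hx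
      rw [Module.Basis.mem_span_image]
      intro p hp
      simp only [Set.mem_setOf_eq]
      intro h0
      have hp' : M.basis.repr x p ≠ 0 := Finsupp.mem_support_iff.1 (Finset.mem_coe.1 hp)
      apply hp'
      set c := M.basis.repr x with hc
      have hsum : ∑ q ∈ c.support, c q • M.basis q = x := by
        have := M.basis.linearCombination_repr x
        rwa [Finsupp.linearCombination_apply, Finsupp.sum] at this
      have h1 : ∑ q ∈ c.support, c q • (M.ψm 0) (M.basis q) = 0 := by
        rw [← hx]
        conv_rhs => rw [← hsum]
        rw [map_sum]
        simp only [map_smul]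
      have h2 : ∀ q ∈ c.support, c q • (M.ψm 0) (M.basis q) =
          (if 0 ∈ q.2 then (c q * (-1 : ℂ) ^ (q.1.card + (q.2.erase 0).card)) •
            M.basis (q.1, q.2.erase 0) else 0) := by
        intro q _
        have hq := M.psm0_basis q.1 q.2
        rw [Prod.mk.eta] at hq
        rw [hq]
        split_ifs with h
        · rw [smul_smul]
        · rw [smul_zero]
      rw [Finset.sum_congr rfl h2] at h1
      have h4 := congrArg (fun y => (M.basis.repr y) (p.1, p.2.erase 0)) h1
      simp only [map_sum, map_zero, Finsupp.coe_zero, Pi.zero_apply, Finsupp.finset_sum_apply,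
        apply_ite (fun y => (M.basis.repr y) (p.1, p.2.erase 0)), map_smul, Module.Basis.repr_self,
        Finsupp.smul_single, smul_eq_mul, mul_one, Finsupp.single_apply] at h4
      rw [Finset.sum_eq_single_of_mem p (Finset.mem_coe.1 hp)] at h4
      · rw [if_pos h0, if_pos rfl] at h4
        have hne : ((-1 : ℂ) ^ (p.1.card + (p.2.erase 0).card)) ≠ 0 := by
          apply pow_ne_zero
          norm_num
        exact (mul_eq_zero.1 h4).resolve_right hne
      · intro q hq hqp
        split_ifs with hq0 hqeq
        · exfalso
          apply hqp
          have h1' : q.1 = p.1 := (Prod.ext_iff.1 hqeq).1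
          have h2' : q.2.erase 0 = p.2.erase 0 := (Prod.ext_iff.1 hqeq).2
          have : q.2 = p.2 := by
            rw [← Finset.insert_erase hq0, ← Finset.insert_erase h0, h2']
          exact Prod.ext h1' this
        · rfl
        · rfl
end
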